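/- Let G be a residually finite group generated by a finite set S, such that every finite-order element of G is conjugate to a power of an element of S. Then G is virtually torsion-free: there exists a finite-index normal subgroup N of G containing no nontrivial elements of finite order. -/
import Mathlib

/-- A finitely generated residually finite group in which every finite-order element is
conjugate to a power of a generator is virtually torsion-free: it has a finite-index
normal subgroup with no nontrivial torsion. -/
theorem virtually_torsion_free_of_residually_finite {G : Type*} [Group G]
    (S : Set G) (hSfin : S.Finite) (hgen : Subgroup.closure S = ⊤)
    (hres : ∀ g : G, g ≠ 1 → ∃ H : Subgroup G, H.FiniteIndex ∧ g ∉ H)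
    (htor : ∀ g : G, IsOfFinOrder g → ∃ s ∈ S, ∃ (k : ℤ) (h : G), g = h⁻¹ * s ^ k * h) :
    ∃ N : Subgroup G, N.Normal ∧ N.FiniteIndex ∧ ∀ g ∈ N, IsOfFinOrder g → g = 1 := by
  classical
  set P : Set G := {p | p ≠ 1 ∧ IsOfFinOrder p ∧ ∃ s ∈ S, ∃ k : ℤ, p = s ^ k} with hP
  have hPfin : P.Finite := by
    have hsub : P ⊆ ⋃ s ∈ S, {p | p ≠ 1 ∧ IsOfFinOrder p ∧ ∃ k : ℤ, p = s ^ k} := by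
      rintro p ⟨hp1, hpo, s, hs, k, hk⟩
      exact Set.mem_biUnion hs ⟨hp1, hpo, k, hk⟩
    refine Set.Finite.subset (Set.Finite.biUnion hSfin fun s hs => ?_) hsub
    by_cases hso : IsOfFinOrder s
    · refine hso.finite_zpowers.subset ?_
      rintro p ⟨-, -, k, hk⟩
      exact ⟨k, hk.symm⟩
    · convert Set.finite_empty
      ext p
      simp only [Set.mem_setOf_eq, Set.mem_empty_iff_false, iff_false, not_and]
      rintro hp1 hpo ⟨k, rfl⟩
      rcases lt_trichotomy k 0 with hk | rfl | hk
      · apply hso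
        have : IsOfFinOrder ((s ^ k)⁻¹) := hpo.inv
        rw [← zpow_neg] at this
        have h2 : s ^ (-k).toNat = s ^ (-k) := by
          rw [← zpow_natCast, Int.toNat_of_nonneg (by omega)]
        rw [← h2] at this
        exact this.of_pow (by omega)
      · exact hp1 (zpow_zero s)
      · apply hso
        have h2 : s ^ k.toNat = s ^ k := by
          rw [← zpow_natCast, Int.toNat_of_nonneg (by omega)]
        rw [← h2] at hpo
        exact hpo.of_pow (by omega)
  have hH : ∀ p : P, ∃ H : Subgroup G, H.FiniteIndex ∧ (p : G) ∉ H :=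
    fun p => hres p p.2.1
  choose H hHfi hHp using hH
  haveI : Finite ↥P := hPfin.to_subtype
  set K : Subgroup G := ⨅ p : P, H p with hK
  haveI hKfi : K.FiniteIndex := Subgroup.finiteIndex_iInf hHfi
  refine ⟨K.normalCore, inferInstance, inferInstance, ?_⟩
  intro g hg hgo
  by_contra hg1
  obtain ⟨s, hs, k, h, hgh⟩ := htor g hgo
  have hsk : s ^ k = h * g * h⁻¹ := by
    rw [hgh]; group
  have hskmem : s ^ k ∈ K.normalCore := by
    rw [hsk]
    have := (Subgroup.normalCore_normal K).conj_mem g hg h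
    simpa [mul_assoc] using this
  have hskP : s ^ k ∈ P := by
    refine ⟨?_, ?_, s, hs, k, rfl⟩
    · intro h1
      exact hg1 (by rw [hgh, h1]; group)
    · rw [hsk]
      obtain ⟨n, hn, hpow⟩ := hgo.exists_pow_eq_one
      exact isOfFinOrder_iff_pow_eq_one.2 ⟨n, hn, by rw [conj_pow, hpow]; group⟩
  have : s ^ k ∈ H ⟨s ^ k, hskP⟩ := by
    have h1 : K.normalCore ≤ K := K.normalCore_le
    have h2 : K ≤ H ⟨s ^ k, hskP⟩ := iInf_le _ _
    exact h2 (h1 hskmem)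
  exact hHp ⟨s ^ k, hskP⟩ this
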